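/- For k = 8 the maximum of nfc(F) over all minimally unsatisfiable clause-sets F with deficiency δ(F) = 8 equals 10, and for k = 10 the maximum of nfc(F) over all minimally unsatisfiable clause-sets F with δ(F) = 10 equals 12; in both cases the maximum is already attained by unsatisfiable hitting clause-sets. -/

import Mathlib

/-- A clause: a finite set of nonzero integers (literals) that is clash-free. -/
def IsClause (C : Finset ℤ) : Prop := (0 : ℤ) ∉ C ∧ ∀ x ∈ C, -x ∉ C

/-- A clause-set: a finite set of clauses. -/
def IsClauseSet (F : Finset (Finset ℤ)) : Prop := ∀ C ∈ F, IsClause C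

/-- The variables of a clause: the absolute values of its literals. -/
def clauseVar (C : Finset ℤ) : Finset ℕ := C.image Int.natAbs

/-- The variables of a clause-set. -/
def var (F : Finset (Finset ℤ)) : Finset ℕ := F.biUnion clauseVar

/-- The number of variables `n(F)`. -/
def numVar (F : Finset (Finset ℤ)) : ℕ := (var F).card

/-- The deficiency `δ(F) = c(F) - n(F)`. -/
def deficiency (F : Finset (Finset ℤ)) : ℤ := (F.card : ℤ) - (numVar F : ℤ)

/-- `F` is satisfiable iff some clause `C` intersects every clause of `F`. -/
def Satisfiable (F : Finset (Finset ℤ)) : Prop :=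
  ∃ C : Finset ℤ, IsClause C ∧ ∀ D ∈ F, (C ∩ D).Nonempty

/-- `F` is hitting iff any two distinct clauses of `F` clash. -/
def Hitting (F : Finset (Finset ℤ)) : Prop :=
  ∀ C ∈ F, ∀ D ∈ F, C ≠ D → ∃ x ∈ C, -x ∈ D

/-- `F` is minimally unsatisfiable. -/
def MinUnsat (F : Finset (Finset ℤ)) : Prop :=
  ¬ Satisfiable F ∧ ∀ G ⊂ F, Satisfiable G

/-- The number of full clauses of `F`. -/
def nfc (F : Finset (Finset ℤ)) : ℕ :=
  (F.filter (fun C => clauseVar C = var F)).card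

/-- The degree of a variable `v` in `F`. -/
def vdeg (F : Finset (Finset ℤ)) (v : ℕ) : ℕ :=
  (F.filter (fun C => v ∈ clauseVar C)).card

/-- The minimal variable-degree of `F` (for `n(F) > 0`). -/
noncomputable def minVarDeg (F : Finset (Finset ℤ)) : ℕ :=
  sInf {d : ℕ | ∃ v ∈ var F, vdeg F v = d}


/-- literal satisfied by assignment S (set of true variables) -/
def satLit (S : Finset ℕ) (x : ℤ) : Bool := if 0 < x then x.natAbs ∈ S else x.natAbs ∉ S

def satC (S : Finset ℕ) (C : Finset ℤ) : Prop := ∃ x ∈ C, satLit S x = true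

instance (S C) : Decidable (satC S C) := by unfold satC; infer_instance

def models (V : Finset ℕ) (G : Finset (Finset ℤ)) : Finset (Finset ℕ) :=
  V.powerset.filter (fun S => ∀ C ∈ G, satC S C)

def liveLit (v : ℕ) (b : Bool) : ℤ := if b then (v : ℤ) else -(v : ℤ)

def restr (G : Finset (Finset ℤ)) (v : ℕ) (b : Bool) : Finset (Finset ℤ) :=
  (G.filter (fun C => liveLit v b ∉ C)).image (fun C => C.erase (liveLit v (!b)))

lemma natAbs_ne_of (v : ℕ) (x : ℤ) (h1 : x ≠ (v:ℤ)) (h2 : x ≠ -(v:ℤ)) : x.natAbs ≠ v := by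
  intro h; rcases Int.natAbs_eq_iff.mp h with h' | h' <;> simp_all

lemma satLit_erase (S : Finset ℕ) (v : ℕ) (x : ℤ) (h : x.natAbs ≠ v) :
    satLit (S.erase v) x = satLit S x := by
  unfold satLit
  by_cases h0 : 0 < x <;> simp [h0, Finset.mem_erase, h]

lemma satLit_live (S : Finset ℕ) (v : ℕ) (b : Bool) (hv : v ≠ 0) (hb : (v ∈ S) = b) :
    satLit S (liveLit v b) = true := by
  cases b <;> unfold liveLit satLit <;> simp_all <;> omega

lemma satLit_dead (S : Finset ℕ) (v : ℕ) (b : Bool) (hv : v ≠ 0) (hb : (v ∈ S) = b) :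
    satLit S (liveLit v (!b)) = false := by
  cases b <;> unfold liveLit satLit <;> simp_all <;> omega

lemma sem_forward (S : Finset ℕ) (G : Finset (Finset ℤ)) (v : ℕ) (b : Bool)
    (hv : v ≠ 0) (hb : (v ∈ S) = b)
    (h : ∀ C ∈ G, satC S C) : ∀ C' ∈ restr G v b, satC (S.erase v) C' := by
  intro C' hC'
  obtain ⟨C, hCf, rfl⟩ := Finset.mem_image.mp hC'
  obtain ⟨hCG, hlive⟩ := Finset.mem_filter.mp hCf
  obtain ⟨x, hxC, hx⟩ := h C hCG
  have hxdead : x ≠ liveLit v (!b) := by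
    intro h'; rw [h', satLit_dead S v b hv hb] at hx; exact Bool.false_ne_true hx
  have hxlive : x ≠ liveLit v b := fun h' => hlive (h' ▸ hxC)
  have hne : x.natAbs ≠ v := by
    apply natAbs_ne_of v x
    · intro h'; cases b
      · exact hxdead (by simpa [liveLit] using h')
      · exact hxlive (by simpa [liveLit] using h')
    · intro h'; cases b
      · exact hxlive (by simpa [liveLit] using h')
      · exact hxdead (by simpa [liveLit] using h')
  exact ⟨x, Finset.mem_erase.mpr ⟨hxdead, hxC⟩, by rw [satLit_erase S v x hne]; exact hx⟩

lemma sem_backward (S : Finset ℕ) (G : Finset (Finset ℤ)) (v : ℕ) (b : Bool)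
    (hv : v ≠ 0) (hb : (v ∈ S) = b)
    (h : ∀ C' ∈ restr G v b, satC (S.erase v) C') : ∀ C ∈ G, satC S C := by
  intro C hCG
  by_cases hlive : liveLit v b ∈ C
  · exact ⟨liveLit v b, hlive, satLit_live S v b hv hb⟩
  · have hC' : C.erase (liveLit v (!b)) ∈ restr G v b :=
      Finset.mem_image_of_mem _ (Finset.mem_filter.mpr ⟨hCG, hlive⟩)
    obtain ⟨x, hxC', hx⟩ := h _ hC'
    obtain ⟨hxdead, hxC⟩ := Finset.mem_erase.mp hxC'
    have hxlive : x ≠ liveLit v b := fun h' => hlive (h' ▸ hxC)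
    have hne : x.natAbs ≠ v := by
      apply natAbs_ne_of v x
      · intro h'; cases b
        · exact hxdead (by simpa [liveLit] using h')
        · exact hxlive (by simpa [liveLit] using h')
      · intro h'; cases b
        · exact hxlive (by simpa [liveLit] using h')
        · exact hxdead (by simpa [liveLit] using h')
    exact ⟨x, hxC, by rw [satLit_erase S v x hne] at hx; exact hx⟩

lemma card_branch (V : Finset ℕ) (G : Finset (Finset ℤ)) (v : ℕ) (hv0 : v ≠ 0) (hvV : v ∈ V)
    (b : Bool) :
    ((models V G).filter (fun S => (v ∈ S) = b)).card
      = (models (V.erase v) (restr G v b)).card := by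
  apply Finset.card_bij (fun S _ => S.erase v)
  · -- maps into
    intro S hS
    simp only [Finset.mem_filter, models, Finset.mem_powerset] at hS ⊢
    obtain ⟨⟨hsub, hsat⟩, hb⟩ := hS
    refine ⟨fun w hw => ?_, sem_forward S G v b hv0 hb hsat⟩
    · obtain ⟨hne, hwS⟩ := Finset.mem_erase.mp hw
      exact Finset.mem_erase.mpr ⟨hne, hsub hwS⟩
  · -- inj
    intro S1 h1 S2 h2 he
    have hb1 := (Finset.mem_filter.mp h1).2
    have hb2 := (Finset.mem_filter.mp h2).2
    cases b
    · have h1' : v ∉ S1 := by simp [eq_iff_iff] at hb1; exact hb1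
      have h2' : v ∉ S2 := by simp [eq_iff_iff] at hb2; exact hb2
      rw [← Finset.erase_eq_of_notMem h1', ← Finset.erase_eq_of_notMem h2']; exact he
    · have h1' : v ∈ S1 := by simp [eq_iff_iff] at hb1; exact hb1
      have h2' : v ∈ S2 := by simp [eq_iff_iff] at hb2; exact hb2
      rw [← Finset.insert_erase h1', ← Finset.insert_erase h2', he]
  · -- surj
    intro S' hS'
    simp only [models, Finset.mem_filter, Finset.mem_powerset] at hS'
    obtain ⟨hsub, hsat⟩ := hS'
    have hvn : v ∉ S' := fun h => (Finset.mem_erase.mp (hsub h)).1 rfl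
    refine ⟨if b then insert v S' else S', ?_, ?_⟩
    · have hbmem : (v ∈ (if b then insert v S' else S')) = b := by
        cases b <;> simp [hvn]
      have herase : (if b then insert v S' else S').erase v = S' := by
        cases b <;> simp [Finset.erase_insert hvn, Finset.erase_eq_of_notMem hvn]
      simp only [Finset.mem_filter, models, Finset.mem_powerset]
      refine ⟨⟨?_, ?_⟩, hbmem⟩
      · intro w hw
        by_cases hwv : w = v
        · subst hwv; cases b <;> simp_all
        · have : w ∈ S' := by
            cases b <;> simp_all [Finset.mem_insert]
          exact Finset.mem_of_mem_erase (hsub this)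
      · apply sem_backward _ G v b hv0 hbmem
        rw [herase]; exact hsat
    · cases b <;> simp [Finset.erase_insert hvn, Finset.erase_eq_of_notMem hvn]

lemma models_split (V : Finset ℕ) (G : Finset (Finset ℤ)) (v : ℕ) (hv0 : v ≠ 0) (hvV : v ∈ V) :
    (models V G).card
      = (models (V.erase v) (restr G v true)).card
        + (models (V.erase v) (restr G v false)).card := by
  rw [← card_branch V G v hv0 hvV true, ← card_branch V G v hv0 hvV false]
  rw [← Finset.card_filter_add_card_filter_not (p := fun S => (v ∈ S) = true)]
  have he : (models V G).filter (fun S => (v ∈ S) = false)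
      = (models V G).filter (fun S => ¬ ((v ∈ S) = true)) := by
    apply Finset.filter_congr
    intro S _
    by_cases h : v ∈ S <;> simp [h]
  rw [he]

lemma restr_card_le (G : Finset (Finset ℤ)) (v : ℕ) (b : Bool) :
    (restr G v b).card ≤ G.card :=
  le_trans Finset.card_image_le (Finset.card_filter_le _ _)

lemma restr_card_lt (G : Finset (Finset ℤ)) (v : ℕ) (b : Bool)
    (h : ∃ C ∈ G, liveLit v b ∈ C) : (restr G v b).card < G.card := by
  obtain ⟨C, hCG, hC⟩ := h
  apply lt_of_le_of_lt Finset.card_image_le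
  apply Finset.card_lt_card
  constructor
  · exact Finset.filter_subset _ _
  · intro hsub
    exact (Finset.mem_filter.mp (hsub hCG)).2 hC

lemma restr_eq_of_not_occ (G : Finset (Finset ℤ)) (v : ℕ) (b : Bool)
    (hP : ∀ C ∈ G, ((v:ℤ)) ∉ C) (hN : ∀ C ∈ G, (-(v:ℤ)) ∉ C) : restr G v b = G := by
  unfold restr
  have h1 : G.filter (fun C => liveLit v b ∉ C) = G := by
    apply Finset.filter_true_of_mem
    intro C hC; cases b <;> simp [liveLit] <;> [exact hN C hC; exact hP C hC]
  rw [h1]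
  have h2 : ∀ C ∈ G, C.erase (liveLit v (!b)) = C := by
    intro C hC
    apply Finset.erase_eq_of_notMem
    cases b <;> simp [liveLit] <;> [exact hP C hC; exact hN C hC]
  calc G.image (fun C => C.erase (liveLit v (!b))) = G.image id := Finset.image_congr h2
    _ = G := Finset.image_id

lemma shift_model (V : Finset ℕ) (G : Finset (Finset ℤ)) (v : ℕ) (hv0 : v ≠ 0) (hvV : v ∈ V)
    (b : Bool) (hdead : ∀ C ∈ G, liveLit v (!b) ∉ C)
    (hne : (models V G).Nonempty) :
    0 < ((models V G).filter (fun S => (v ∈ S) = b)).card := by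
  obtain ⟨S, hS⟩ := hne
  simp only [models, Finset.mem_filter, Finset.mem_powerset] at hS
  obtain ⟨hsub, hsat⟩ := hS
  set S' : Finset ℕ := if b then insert v S else S.erase v with hS'def
  have hbmem : (v ∈ S') = b := by
    cases b <;> simp [hS'def]
  have hsub' : S' ⊆ V := by
    intro w hw
    cases b <;> simp [hS'def] at hw
    · exact hsub hw.2
    · rcases hw with rfl | hw
      · exact hvV
      · exact hsub hw
  have hsat' : ∀ C ∈ G, satC S' C := by
    intro C hC
    obtain ⟨x, hxC, hx⟩ := hsat C hC
    by_cases hxv : x.natAbs = v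
    · -- x is ±v ; since dead lit not in C, x = liveLit v b
      have hxlive : x = liveLit v b := by
        rcases Int.natAbs_eq_iff.mp hxv with h' | h'
        · cases b
          · exact absurd (h' ▸ hxC) (by simpa [liveLit] using hdead C hC)
          · simpa [liveLit] using h'
        · cases b
          · simpa [liveLit] using h'
          · exact absurd (h' ▸ hxC) (by simpa [liveLit] using hdead C hC)
      exact ⟨x, hxC, by rw [hxlive]; exact satLit_live S' v b hv0 hbmem⟩
    · refine ⟨x, hxC, ?_⟩
      have hee : S'.erase v = S.erase v := by
        cases b <;> simp [hS'def, Finset.erase_insert_eq_erase, Finset.erase_idem]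
      rw [← satLit_erase S' v x hxv, hee, satLit_erase S v x hxv]
      exact hx
  have : S' ∈ (models V G).filter (fun S => (v ∈ S) = b) := by
    simp only [models, Finset.mem_filter, Finset.mem_powerset]
    exact ⟨⟨hsub', hsat'⟩, hbmem⟩
  exact Finset.card_pos.mpr ⟨S', this⟩

/-- The key dichotomy: model count `N` with `k` clauses and `w` variables. -/
def HC (N k w : ℕ) : Prop :=
  2^(w+1) ≤ N * 2^k ∨ ∃ j, k ≤ j ∧ j ≤ w ∧ N * 2^k + 2^j = 2^(w+1)

lemma mul_pow_shift (N k m : ℕ) (h : k ≤ m) : N * 2^m = (N * 2^k) * 2^(m-k) := by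
  rw [mul_assoc, ← pow_add]
  congr 2
  omega

lemma lift_weak {N k w m : ℕ} (hc : HC N k w) (hkm : k ≤ m) : HC N m w := by
  rcases hc with hge | ⟨j, hkj, hjw, heq⟩
  · left
    calc 2^(w+1) ≤ N * 2^k := hge
      _ ≤ (N * 2^k) * 2^(m-k) := Nat.le_mul_of_pos_right _ (pow_pos (by norm_num) _)
      _ = N * 2^m := (mul_pow_shift N k m hkm).symm
  · by_cases hkm' : k = m
    · subst hkm'; exact Or.inr ⟨j, hkj, hjw, heq⟩
    · left
      have hd : 1 ≤ m - k := by omega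
      have heq2 : N * 2^m + 2^(j + (m-k)) = 2^(w+1+(m-k)) := by
        rw [mul_pow_shift N k m hkm, pow_add, pow_add, ← add_mul, heq, ← pow_add]
      have h1 : 2^(j + (m-k)) ≤ 2^(w + (m-k)) := Nat.pow_le_pow_right (by norm_num) (by omega)
      have h2 : 2^(w+1+(m-k)) = 2 * 2^(w + (m-k)) := by rw [← pow_succ']; congr 1; omega
      have h3 : 2^(w+1) ≤ 2^(w + (m-k)) := Nat.pow_le_pow_right (by norm_num) (by omega)
      omega

lemma lift_strong {N k w m : ℕ} (hc : HC N k w) (hkm : k < m) : HC N m (w+1) := by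
  rcases hc with hge | ⟨j, hkj, hjw, heq⟩
  · left
    have h4 : 2^(w+1) * 2^(m-k) = 2^(w+1+(m-k)) := (pow_add 2 _ _).symm
    have h5 : (2:ℕ)^(w+1+1) ≤ 2^(w+1+(m-k)) := Nat.pow_le_pow_right (by norm_num) (by omega)
    calc 2^(w+1+1) ≤ 2^(w+1+(m-k)) := h5
      _ = 2^(w+1) * 2^(m-k) := h4.symm
      _ ≤ (N * 2^k) * 2^(m-k) := Nat.mul_le_mul_right _ hge
      _ = N * 2^m := (mul_pow_shift N k m (le_of_lt hkm)).symm
  · have heq2 : N * 2^m + 2^(j + (m-k)) = 2^(w+1+(m-k)) := by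
      rw [mul_pow_shift N k m (le_of_lt hkm), pow_add, pow_add, ← add_mul, heq, ← pow_add]
    by_cases hd1 : m - k = 1
    · right
      refine ⟨j+1, by omega, by omega, ?_⟩
      rw [hd1] at heq2
      convert heq2 using 2 <;> omega
    · left
      have hd : 2 ≤ m - k := by omega
      have h1 : 2^(j + (m-k)) ≤ 2^(w + (m-k)) := Nat.pow_le_pow_right (by norm_num) (by omega)
      have h2 : 2^(w+1+(m-k)) = 2 * 2^(w + (m-k)) := by rw [← pow_succ']; congr 1; omega
      have h3 : 2^(w+1+1) ≤ 2^(w + (m-k)) := Nat.pow_le_pow_right (by norm_num) (by omega)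
      omega

lemma combineHC {N1 N2 m w : ℕ} (h1 : HC N1 m (w+1)) (h2 : N2 = 0 ∨ HC N2 m w) :
    HC (N1 + N2) m (w+1) := by
  unfold HC
  rw [add_mul]
  rcases h1 with hge | ⟨i, hmi, hiw, heq1⟩
  · left
    calc 2^(w+1+1) ≤ N1 * 2^m := hge
      _ ≤ N1 * 2^m + N2 * 2^m := Nat.le_add_right _ _
  · rcases h2 with rfl | h2
    · exact Or.inr ⟨i, hmi, hiw, by simpa using heq1⟩
    · rcases h2 with hge2 | ⟨j, hmj, hjw, heq2⟩
      · left
        have hi : (2:ℕ)^i ≤ 2^(w+1) := Nat.pow_le_pow_right (by norm_num) hiw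
        omega
      · by_cases hiw' : i = w + 1
        · right
          refine ⟨j, hmj, by omega, ?_⟩
          subst hiw'
          have hw : (2:ℕ)^(w+1+1) = 2 * 2^(w+1) := by rw [pow_succ]; ring
          omega
        · left
          have hi : (2:ℕ)^i ≤ 2^w := Nat.pow_le_pow_right (by norm_num) (by omega)
          have hj : (2:ℕ)^j ≤ 2^w := Nat.pow_le_pow_right (by norm_num) hjw
          have hw1 : (2:ℕ)^(w+1) = 2 * 2^w := by rw [pow_succ]; ring
          have hw2 : (2:ℕ)^(w+1+1) = 2 * 2^(w+1) := by rw [pow_succ]; ring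
          omega

lemma lemH (n : ℕ) : ∀ (V : Finset ℕ) (G : Finset (Finset ℤ)), V.card = n → 0 ∉ V →
    (models V G).Nonempty → HC (models V G).card G.card n := by
  induction n with
  | zero =>
    intro V G hcard _ hne
    rw [Finset.card_eq_zero] at hcard
    subst hcard
    have hsub : models ∅ G ⊆ {∅} := by
      intro S hS
      have := (Finset.mem_filter.mp hS).1
      simpa using this
    have hcard1 : (models ∅ G).card = 1 := by
      have h1 := Finset.card_le_card hsub
      simp only [Finset.card_singleton] at h1
      have h2 := Finset.card_pos.mpr hne
      omega
    rw [hcard1]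
    by_cases hm : G.card = 0
    · right
      exact ⟨0, by omega, by omega, by rw [hm]; norm_num⟩
    · left
      have : (2:ℕ)^1 ≤ 2^(G.card) := Nat.pow_le_pow_right (by norm_num) (by omega)
      simpa using this
  | succ n ih =>
    intro V G hcard h0V hne
    have hVne : V.Nonempty := Finset.card_pos.mp (by omega)
    obtain ⟨v, hvV⟩ := hVne
    have hv0 : v ≠ 0 := fun h => h0V (h ▸ hvV)
    set W := V.erase v with hW
    have hWcard : W.card = n := by
      rw [hW, Finset.card_erase_of_mem hvV, hcard]; omega
    have h0W : 0 ∉ W := fun h => h0V (Finset.mem_of_mem_erase h)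
    have hsplit := models_split V G v hv0 hvV
    set NT := (models W (restr G v true)).card with hNT
    set NF := (models W (restr G v false)).card with hNF
    have hNpos : 0 < (models V G).card := Finset.card_pos.mpr hne
    -- branch facts
    have hTle : (restr G v true).card ≤ G.card := restr_card_le G v true
    have hFle : (restr G v false).card ≤ G.card := restr_card_le G v false
    have ihT : 0 < NT → HC NT (restr G v true).card n := fun h =>
      ih W (restr G v true) hWcard h0W (Finset.card_pos.mp h)
    have ihF : 0 < NF → HC NF (restr G v false).card n := fun h =>
      ih W (restr G v false) hWcard h0W (Finset.card_pos.mp h)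
    by_cases hP : ∃ C ∈ G, ((v:ℤ)) ∈ C
    · by_cases hN : ∃ C ∈ G, (-(v:ℤ)) ∈ C
      · -- both polarities occur: both branches drop a clause
        have hTlt : (restr G v true).card < G.card := restr_card_lt G v true (by
          simpa [liveLit] using hP)
        have hFlt : (restr G v false).card < G.card := restr_card_lt G v false (by
          simpa [liveLit] using hN)
        by_cases hNT0 : NT = 0
        · -- all models in false branch
          have hNFpos : 0 < NF := by omega
          have h1 : HC NF G.card (n+1) := lift_strong (ihF hNFpos) hFlt
          have := combineHC h1 (Or.inl hNT0)
          rw [hsplit, Nat.add_comm]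
          exact this
        · have hNTpos : 0 < NT := by omega
          have h1 : HC NT G.card (n+1) := lift_strong (ihT hNTpos) hTlt
          have h2 : NF = 0 ∨ HC NF G.card n := by
            by_cases hNF0 : NF = 0
            · exact Or.inl hNF0
            · exact Or.inr (lift_weak (ihF (by omega)) hFle)
          have := combineHC h1 h2
          rw [hsplit]
          exact this
      · -- only positive occurrence: true branch drops a clause and is satisfiable
        have hTlt : (restr G v true).card < G.card := restr_card_lt G v true (by
          simpa [liveLit] using hP)
        push_neg at hN
        have hdead : ∀ C ∈ G, liveLit v (!true) ∉ C := by
          intro C hC; simpa [liveLit] using hN C hC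
        have hNTpos : 0 < NT := by
          rw [hNT, ← card_branch V G v hv0 hvV true]
          exact shift_model V G v hv0 hvV true hdead hne
        have h1 : HC NT G.card (n+1) := lift_strong (ihT hNTpos) hTlt
        have h2 : NF = 0 ∨ HC NF G.card n := by
          by_cases hNF0 : NF = 0
          · exact Or.inl hNF0
          · exact Or.inr (lift_weak (ihF (by omega)) hFle)
        have := combineHC h1 h2
        rw [hsplit]
        exact this
    · by_cases hN : ∃ C ∈ G, (-(v:ℤ)) ∈ C
      · -- only negative occurrence
        have hFlt : (restr G v false).card < G.card := restr_card_lt G v false (by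
          simpa [liveLit] using hN)
        push_neg at hP
        have hdead : ∀ C ∈ G, liveLit v (!false) ∉ C := by
          intro C hC; simpa [liveLit] using hP C hC
        have hNFpos : 0 < NF := by
          rw [hNF, ← card_branch V G v hv0 hvV false]
          exact shift_model V G v hv0 hvV false hdead hne
        have h1 : HC NF G.card (n+1) := lift_strong (ihF hNFpos) hFlt
        have h2 : NT = 0 ∨ HC NT G.card n := by
          by_cases hNT0 : NT = 0
          · exact Or.inl hNT0
          · exact Or.inr (lift_weak (ihT (by omega)) hTle)
        have := combineHC h1 h2
        rw [hsplit, Nat.add_comm]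
        exact this
      · -- variable does not occur at all
        push_neg at hP
        push_neg at hN
        have hT : restr G v true = G := restr_eq_of_not_occ G v true hP hN
        have hF : restr G v false = G := restr_eq_of_not_occ G v false hP hN
        have hNTNF : NT = NF := by rw [hNT, hNF, hT, hF]
        have hNTpos : 0 < NT := by
          rw [hsplit] at hNpos
          omega
        have hHC : HC NT G.card n := by
          have := ihT hNTpos
          rwa [hT] at this
        rw [hsplit, ← hNTNF]
        rcases hHC with hge | ⟨j, hmj, hjw, heq⟩
        · left
          have : (2:ℕ)^(n+1+1) = 2 * 2^(n+1) := by rw [pow_succ]; ring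
          have h2 : (NT + NT) * 2^G.card = 2 * (NT * 2^G.card) := by ring
          omega
        · right
          refine ⟨j+1, by omega, by omega, ?_⟩
          have h2 : (NT + NT) * 2^G.card = 2 * (NT * 2^G.card) := by ring
          have h3 : (2:ℕ)^(j+1) = 2 * 2^j := by rw [pow_succ]; ring
          have h4 : (2:ℕ)^(n+1+1) = 2 * 2^(n+1) := by rw [pow_succ]; ring
          omega

lemma mem_var_of {F : Finset (Finset ℤ)} {C : Finset ℤ} {x : ℤ} (hC : C ∈ F) (hx : x ∈ C) :
    x.natAbs ∈ var F :=
  Finset.mem_biUnion.mpr ⟨C, hC, Finset.mem_image_of_mem _ hx⟩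

lemma var_ne_zero {F : Finset (Finset ℤ)} (hF : IsClauseSet F) : 0 ∉ var F := by
  intro h
  obtain ⟨C, hC, hx⟩ := Finset.mem_biUnion.mp h
  obtain ⟨x, hxC, hxa⟩ := Finset.mem_image.mp hx
  have hx0 : x = 0 := by omega
  exact (hF C hC).1 (hx0 ▸ hxC)

/-- From unsatisfiability: every assignment falsifies some clause. -/
lemma unsat_falsifies {F : Finset (Finset ℤ)} (hF : IsClauseSet F) (hU : ¬ Satisfiable F)
    (S : Finset ℕ) (hS : S ⊆ var F) : ∃ D ∈ F, ¬ satC S D := by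
  set V := var F with hV
  set K : Finset ℤ := S.image (fun w : ℕ => (w:ℤ)) ∪ (V \ S).image (fun w : ℕ => -(w:ℤ)) with hK
  have hmemK : ∀ x : ℤ, x ∈ K ↔ (∃ w ∈ S, (w:ℤ) = x) ∨ (∃ w ∈ V \ S, -(w:ℤ) = x) := by
    intro x
    simp [hK, Finset.mem_union, Finset.mem_image]
  have h0V : (0:ℕ) ∉ V := var_ne_zero hF
  have hKcl : IsClause K := by
    constructor
    · intro h
      rcases (hmemK 0).mp h with ⟨w, hw, hww⟩ | ⟨w, hw, hww⟩
      · have hwV : w ∈ V := hS hw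
        have : w = 0 := by omega
        exact h0V (this ▸ hwV)
      · have hwV : w ∈ V := (Finset.mem_sdiff.mp hw).1
        have : w = 0 := by omega
        exact h0V (this ▸ hwV)
    · intro x hx hnx
      rcases (hmemK x).mp hx with ⟨a, ha, haa⟩ | ⟨a, ha, haa⟩ <;>
        rcases (hmemK (-x)).mp hnx with ⟨b, hb, hbb⟩ | ⟨b, hb, hbb⟩
      · have ha0 : a ≠ 0 := fun h => h0V (h ▸ hS ha)
        omega
      · have hab : a = b := by omega
        exact (Finset.mem_sdiff.mp hb).2 (hab ▸ ha)
      · have hab : a = b := by omega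
        exact (Finset.mem_sdiff.mp ha).2 (hab ▸ hb)
      · have ha0 : a ≠ 0 := fun h => h0V (h ▸ (Finset.mem_sdiff.mp ha).1)
        omega
  have : ¬ ∀ D ∈ F, (K ∩ D).Nonempty := fun h => hU ⟨K, hKcl, h⟩
  push_neg at this
  obtain ⟨D, hDF, hD⟩ := this
  refine ⟨D, hDF, ?_⟩
  rintro ⟨x, hxD, hsat⟩
  have hx0 : x ≠ 0 := fun h => (hF D hDF).1 (h ▸ hxD)
  have hxV : x.natAbs ∈ V := mem_var_of hDF hxD
  unfold satLit at hsat
  by_cases hpos : 0 < x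
  · rw [if_pos hpos] at hsat
    have hmem : x.natAbs ∈ S := by simpa using hsat
    have hxK : x ∈ K := (hmemK x).mpr (Or.inl ⟨x.natAbs, hmem, by omega⟩)
    have : x ∈ K ∩ D := Finset.mem_inter.mpr ⟨hxK, hxD⟩
    rw [hD] at this
    exact absurd this (Finset.notMem_empty x)
  · rw [if_neg hpos] at hsat
    have hmem : x.natAbs ∉ S := by simpa using hsat
    have hxK : x ∈ K := (hmemK x).mpr (Or.inr ⟨x.natAbs, Finset.mem_sdiff.mpr ⟨hxV, hmem⟩, by omega⟩)
    have : x ∈ K ∩ D := Finset.mem_inter.mpr ⟨hxK, hxD⟩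
    rw [hD] at this
    exact absurd this (Finset.notMem_empty x)

/-- The unique falsifying assignment of a full clause. -/
def pt (C : Finset ℤ) : Finset ℕ := (C.filter (fun x => x < 0)).image Int.natAbs

lemma mem_pt {C : Finset ℤ} {w : ℕ} : w ∈ pt C ↔ ∃ x ∈ C, x < 0 ∧ x.natAbs = w := by
  unfold pt
  simp only [Finset.mem_image, Finset.mem_filter]
  constructor
  · rintro ⟨x, ⟨h1, h2⟩, h3⟩; exact ⟨x, h1, h2, h3⟩
  · rintro ⟨x, h1, h2, h3⟩; exact ⟨x, ⟨h1, h2⟩, h3⟩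

lemma pt_subset (C : Finset ℤ) : pt C ⊆ clauseVar C := by
  intro w hw
  obtain ⟨x, h1, _, h3⟩ := mem_pt.mp hw
  exact Finset.mem_image.mpr ⟨x, h1, h3⟩

lemma pt_not_sat {C : Finset ℤ} (hC : IsClause C) : ¬ satC (pt C) C := by
  rintro ⟨x, hxC, hsat⟩
  have hx0 : x ≠ 0 := fun h => hC.1 (h ▸ hxC)
  unfold satLit at hsat
  by_cases hpos : 0 < x
  · rw [if_pos hpos] at hsat
    have hmem : x.natAbs ∈ pt C := by simpa using hsat
    obtain ⟨y, hyC, hy1, hy2⟩ := mem_pt.mp hmem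
    have : y = -x := by omega
    exact hC.2 x hxC (this ▸ hyC)
  · rw [if_neg hpos] at hsat
    have hmem : x.natAbs ∉ pt C := by simpa using hsat
    exact hmem (mem_pt.mpr ⟨x, hxC, by omega, rfl⟩)

lemma pt_unique {C : Finset ℤ} {V S : Finset ℕ} (hC : IsClause C)
    (hfull : clauseVar C = V) (hSV : S ⊆ V) (hns : ¬ satC S C) : S = pt C := by
  have hfail : ∀ x ∈ C, satLit S x = false := by
    intro x hx
    by_contra h
    exact hns ⟨x, hx, by revert h; cases satLit S x <;> simp⟩
  ext w
  constructor
  · intro hwS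
    have hwV : w ∈ clauseVar C := hfull ▸ hSV hwS
    obtain ⟨x, hxC, hxw⟩ := Finset.mem_image.mp hwV
    have hx0 : x ≠ 0 := fun h => hC.1 (h ▸ hxC)
    have := hfail x hxC
    unfold satLit at this
    by_cases hpos : 0 < x
    · rw [if_pos hpos] at this
      have : x.natAbs ∉ S := by simpa using this
      exact absurd (hxw ▸ hwS) this
    · exact mem_pt.mpr ⟨x, hxC, by omega, hxw⟩
  · intro hw
    obtain ⟨x, hxC, hx1, hx2⟩ := mem_pt.mp hw
    have := hfail x hxC
    unfold satLit at this
    rw [if_neg (by omega)] at this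
    have : x.natAbs ∈ S := by simpa using this
    exact hx2 ▸ this

lemma full_eq_of_pt_eq {C1 C2 : Finset ℤ} {V : Finset ℕ} (h1 : IsClause C1) (h2 : IsClause C2)
    (hf1 : clauseVar C1 = V) (hf2 : clauseVar C2 = V) (hpt : pt C1 = pt C2) : C1 = C2 := by
  have key : ∀ (A B : Finset ℤ), IsClause A → IsClause B → clauseVar A = V → clauseVar B = V →
      pt A = pt B → A ⊆ B := by
    intro A B hA hB hfA hfB hAB
    intro x hxA
    have hx0 : x ≠ 0 := fun h => hA.1 (h ▸ hxA)
    have hxV : x.natAbs ∈ clauseVar B := by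
      rw [hfB, ← hfA]
      exact Finset.mem_image.mpr ⟨x, hxA, rfl⟩
    obtain ⟨y, hyB, hyx⟩ := Finset.mem_image.mp hxV
    have hy0 : y ≠ 0 := fun h => hB.1 (h ▸ hyB)
    have hxy : y = x ∨ y = -x := by omega
    rcases hxy with rfl | rfl
    · exact hyB
    · -- y = -x ∈ B; derive contradiction or x ∈ B
      by_cases hpos : 0 < x
      · -- x > 0 : natAbs x ∉ pt A (else -x ∈ A clash); but -x ∈ B gives natAbs ∈ pt B
        have hnp : x.natAbs ∉ pt A := by
          intro hmem
          obtain ⟨z, hzA, hz1, hz2⟩ := mem_pt.mp hmem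
          have : z = -x := by omega
          exact hA.2 x hxA (this ▸ hzA)
        have hp : x.natAbs ∈ pt B := mem_pt.mpr ⟨-x, hyB, by omega, by omega⟩
        rw [hAB] at hnp
        exact absurd hp hnp
      · -- x < 0 : natAbs x ∈ pt A = pt B, so some z ∈ B, z < 0, |z| = |x| ⇒ z = x
        have hp : x.natAbs ∈ pt A := mem_pt.mpr ⟨x, hxA, by omega, rfl⟩
        rw [hAB] at hp
        obtain ⟨z, hzB, hz1, hz2⟩ := mem_pt.mp hp
        have : z = x := by omega
        exact this ▸ hzB
  exact Finset.Subset.antisymm (key C1 C2 h1 h2 hf1 hf2 hpt) (key C2 C1 h2 h1 hf2 hf1 hpt.symm)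

lemma models_card_eq_nfc {F : Finset (Finset ℤ)} (hF : IsClauseSet F) (hMU : MinUnsat F) :
    (models (var F) (F.filter (fun C => ¬ clauseVar C = var F))).card = nfc F := by
  set V := var F with hV
  set G := F.filter (fun C => ¬ clauseVar C = var F) with hG
  unfold nfc
  symm
  apply Finset.card_bij (fun C _ => pt C)
  · -- maps into models
    intro C hC
    obtain ⟨hCF, hCfull⟩ := Finset.mem_filter.mp hC
    have hCcl : IsClause C := hF C hCF
    -- satisfying assignment for F.erase C
    have hsub : F.erase C ⊂ F := Finset.erase_ssubset hCF
    obtain ⟨K, hKcl, hKsat⟩ := hMU.2 _ hsub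
    set S' := V.filter (fun w : ℕ => (w:ℤ) ∈ K) with hS'
    have hS'V : S' ⊆ V := Finset.filter_subset _ _
    have hsatall : ∀ D ∈ F.erase C, satC S' D := by
      intro D hD
      obtain ⟨x, hxKD⟩ := hKsat D hD
      obtain ⟨hxK, hxD⟩ := Finset.mem_inter.mp hxKD
      have hDF : D ∈ F := Finset.mem_of_mem_erase hD
      have hx0 : x ≠ 0 := fun h => (hF D hDF).1 (h ▸ hxD)
      have hxV : x.natAbs ∈ V := mem_var_of hDF hxD
      refine ⟨x, hxD, ?_⟩
      unfold satLit
      by_cases hpos : 0 < x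
      · rw [if_pos hpos]
        have : (x.natAbs : ℤ) = x := by omega
        simp only [hS', Finset.mem_filter, decide_eq_true_eq]
        exact ⟨hxV, this ▸ hxK⟩
      · rw [if_neg hpos]
        simp only [hS', Finset.mem_filter, decide_eq_true_eq, not_and]
        intro _ hmem
        have : -((x.natAbs : ℤ)) = x := by omega
        exact hKcl.2 _ hmem (by rw [this]; exact hxK)
    obtain ⟨D0, hD0F, hD0ns⟩ := unsat_falsifies hF hMU.1 S' hS'V
    have hD0C : D0 = C := by
      by_contra hne
      exact hD0ns (hsatall D0 (Finset.mem_erase.mpr ⟨hne, hD0F⟩))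
    subst hD0C
    have hSpt : S' = pt D0 := pt_unique hCcl hCfull hS'V hD0ns
    simp only [models, Finset.mem_filter, Finset.mem_powerset]
    constructor
    · rw [← hSpt]; exact hS'V
    · intro D hD
      obtain ⟨hDF, hDnf⟩ := Finset.mem_filter.mp hD
      have hne : D ≠ D0 := fun h => hDnf (h ▸ hCfull)
      rw [← hSpt]
      exact hsatall D (Finset.mem_erase.mpr ⟨hne, hDF⟩)
  · -- injective
    intro C1 h1 C2 h2 heq
    obtain ⟨h1F, h1full⟩ := Finset.mem_filter.mp h1
    obtain ⟨h2F, h2full⟩ := Finset.mem_filter.mp h2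
    exact full_eq_of_pt_eq (hF C1 h1F) (hF C2 h2F) h1full h2full heq
  · -- surjective
    intro S hS
    simp only [models, Finset.mem_filter, Finset.mem_powerset] at hS
    obtain ⟨hSV, hSsat⟩ := hS
    obtain ⟨D0, hD0F, hD0ns⟩ := unsat_falsifies hF hMU.1 S hSV
    have hD0full : clauseVar D0 = V := by
      by_contra h
      exact hD0ns (hSsat D0 (Finset.mem_filter.mpr ⟨hD0F, h⟩))
    refine ⟨D0, Finset.mem_filter.mpr ⟨hD0F, hD0full⟩, ?_⟩
    exact (pt_unique (hF D0 hD0F) hD0full hSV hD0ns).symm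

lemma growth : ∀ s, 4 ≤ s → s + 12 ≤ 2^s := by
  intro s hs
  induction s with
  | zero => omega
  | succ t ih =>
    by_cases ht : 4 ≤ t
    · have := ih ht
      have : 2^(t+1) = 2 * 2^t := by rw [pow_succ]; ring
      omega
    · have ht4 : t = 3 := by omega
      subst ht4
      norm_num

lemma arith_contra (f m n k : ℕ) (hc : f + m = n + k)
    (hk : (k = 8 ∧ 11 ≤ f) ∨ (k = 10 ∧ 13 ≤ f)) (hHC : HC f m n) : False := by
  have hfk : k + 3 ≤ f := by omega
  set s := f - k + 1 with hs
  have hs4 : 4 ≤ s := by omega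
  have hn1 : n + 1 = m + s := by omega
  have hfs : f < s + 11 := by omega
  rcases hHC with hge | ⟨j, hmj, hjn, heq⟩
  · rw [hn1, pow_add] at hge
    rw [mul_comm f] at hge
    have h1 : 2^s ≤ f :=
      Nat.le_of_mul_le_mul_left hge (pow_pos (by norm_num) m)
    have := growth s hs4
    omega
  · set j' := j - m with hj'
    have hjm : j = m + j' := by omega
    have hj'le : j' + k ≤ f := by omega
    have heq2 : (f + 2^j') * 2^m = 2^s * 2^m := by
      have e1 : (2:ℕ)^j = 2^m * 2^j' := by rw [hjm, pow_add]
      have e2 : (2:ℕ)^(n+1) = 2^m * 2^s := by rw [hn1, pow_add]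
      calc (f + 2^j') * 2^m = f * 2^m + 2^m * 2^j' := by ring
        _ = f * 2^m + 2^j := by rw [e1]
        _ = 2^(n+1) := heq
        _ = 2^m * 2^s := e2
        _ = 2^s * 2^m := by ring
    have heq3 : f + 2^j' = 2^s :=
      Nat.eq_of_mul_eq_mul_right (pow_pos (by norm_num) m) heq2
    by_cases hf3 : f = k + 3
    · have hs4' : s = 4 := by omega
      have hj3 : j' ≤ 3 := by omega
      rw [hs4'] at heq3
      interval_cases j' <;> omega
    · -- f ≥ k + 4, so s - 1 ≥ 4 and 2^(s-1) > f, contradiction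
      have hs5 : 5 ≤ s := by omega
      have hj's : j' ≤ s - 1 := by omega
      have h2j : 2^j' ≤ 2^(s-1) := Nat.pow_le_pow_right (by norm_num) hj's
      have h2s : (2:ℕ)^s = 2 * 2^(s-1) := by
        have hh : s - 1 + 1 = s := by omega
        have h := pow_succ' 2 (s-1)
        rwa [hh] at h
      have := growth (s-1) (by omega)
      omega

lemma upper_bound {F : Finset (Finset ℤ)} (hF : IsClauseSet F) (hMU : MinUnsat F) {k : ℕ}
    (hdef : deficiency F = (k : ℤ)) (hk : k = 8 ∨ k = 10) : nfc F ≤ k + 2 := by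
  by_contra hcon
  push_neg at hcon
  have hf : k + 3 ≤ nfc F := hcon
  set V := var F with hV
  set G := F.filter (fun C => ¬ clauseVar C = V) with hG
  have hcards : nfc F + G.card = F.card := by
    unfold nfc
    exact Finset.card_filter_add_card_filter_not _
  have hFcard : F.card = V.card + k := by
    rw [hV]
    unfold deficiency numVar at hdef
    omega
  have hmodels : (models V G).card = nfc F := models_card_eq_nfc hF hMU
  have hne : (models V G).Nonempty := by
    rw [← Finset.card_pos, hmodels]
    omega
  have hHC : HC (models V G).card G.card V.card :=
    lemH V.card V G rfl (var_ne_zero hF) hne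
  rw [hmodels] at hHC
  have hc' : nfc F + G.card = V.card + k := by omega
  have hk' : (k = 8 ∧ 11 ≤ nfc F) ∨ (k = 10 ∧ 13 ≤ nfc F) := by
    rcases hk with rfl | rfl
    · exact Or.inl ⟨rfl, by omega⟩
    · exact Or.inr ⟨rfl, by omega⟩
  exact arith_contra (nfc F) G.card V.card k hc' hk' hHC

def F8 : Finset (Finset ℤ) :=
  { {1,2,3,4}, {1,2,3,-4}, {1,2,-3,4}, {1,2,-3,-4},
    {1,-2,3,4}, {1,-2,3,-4}, {1,-2,-3,4}, {1,-2,-3,-4},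
    {-1,2,3,4}, {-1,2,3,-4}, {-1,-2}, {-1,2,-3} }

def F10 : Finset (Finset ℤ) :=
  { {1,2,3,4}, {1,2,3,-4}, {1,2,-3,4}, {1,2,-3,-4},
    {1,-2,3,4}, {1,-2,3,-4}, {1,-2,-3,4}, {1,-2,-3,-4},
    {-1,2,3,4}, {-1,2,3,-4}, {-1,2,-3,4}, {-1,2,-3,-4},
    {-1,-2,-3}, {-1,-2,3} }

lemma no_inter {C D : Finset ℤ} (h : (C ∩ D).Nonempty) (hD : ∀ x ∈ D, x ∉ C) : False := by
  obtain ⟨x, hx⟩ := h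
  rw [Finset.mem_inter] at hx
  exact hD x hx.2 hx.1

example : IsClauseSet F8 := by unfold IsClauseSet IsClause; decide
example : Hitting F8 := by unfold Hitting; decide
example : deficiency F8 = 8 := by decide
example : nfc F8 = 10 := by decide

lemma not_sat_F8 : ¬ Satisfiable F8 := by
  rintro ⟨C, ⟨h0, notC⟩, hall⟩
  by_cases h1 : (1:ℤ) ∈ C
  · have n1 : (-1:ℤ) ∉ C := notC 1 h1
    by_cases h2 : (2:ℤ) ∈ C
    · have n2 : (-2:ℤ) ∉ C := notC 2 h2
      exact no_inter (hall {-1,-2} (by decide)) (by intro x hx; fin_cases hx <;> assumption)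
    · by_cases h3 : (3:ℤ) ∈ C
      · have n3 : (-3:ℤ) ∉ C := notC 3 h3
        exact no_inter (hall {-1,2,-3} (by decide)) (by intro x hx; fin_cases hx <;> assumption)
      · by_cases h4 : (4:ℤ) ∈ C
        · have n4 : (-4:ℤ) ∉ C := notC 4 h4
          exact no_inter (hall {-1,2,3,-4} (by decide))
            (by intro x hx; fin_cases hx <;> assumption)
        · exact no_inter (hall {-1,2,3,4} (by decide))
            (by intro x hx; fin_cases hx <;> assumption)
  · by_cases h2 : (2:ℤ) ∈ C
    · have n2 : (-2:ℤ) ∉ C := notC 2 h2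
      by_cases h3 : (3:ℤ) ∈ C
      · have n3 : (-3:ℤ) ∉ C := notC 3 h3
        by_cases h4 : (4:ℤ) ∈ C
        · have n4 : (-4:ℤ) ∉ C := notC 4 h4
          exact no_inter (hall {1,-2,-3,-4} (by decide))
            (by intro x hx; fin_cases hx <;> assumption)
        · exact no_inter (hall {1,-2,-3,4} (by decide))
            (by intro x hx; fin_cases hx <;> assumption)
      · by_cases h4 : (4:ℤ) ∈ C
        · have n4 : (-4:ℤ) ∉ C := notC 4 h4
          exact no_inter (hall {1,-2,3,-4} (by decide))
            (by intro x hx; fin_cases hx <;> assumption)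
        · exact no_inter (hall {1,-2,3,4} (by decide))
            (by intro x hx; fin_cases hx <;> assumption)
    · by_cases h3 : (3:ℤ) ∈ C
      · have n3 : (-3:ℤ) ∉ C := notC 3 h3
        by_cases h4 : (4:ℤ) ∈ C
        · have n4 : (-4:ℤ) ∉ C := notC 4 h4
          exact no_inter (hall {1,2,-3,-4} (by decide))
            (by intro x hx; fin_cases hx <;> assumption)
        · exact no_inter (hall {1,2,-3,4} (by decide))
            (by intro x hx; fin_cases hx <;> assumption)
      · by_cases h4 : (4:ℤ) ∈ C
        · have n4 : (-4:ℤ) ∉ C := notC 4 h4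
          exact no_inter (hall {1,2,3,-4} (by decide))
            (by intro x hx; fin_cases hx <;> assumption)
        · exact no_inter (hall {1,2,3,4} (by decide))
            (by intro x hx; fin_cases hx <;> assumption)

lemma not_sat_F10 : ¬ Satisfiable F10 := by
  rintro ⟨C, ⟨h0, notC⟩, hall⟩
  by_cases h1 : (1:ℤ) ∈ C
  · have n1 : (-1:ℤ) ∉ C := notC 1 h1
    by_cases h2 : (2:ℤ) ∈ C
    · have n2 : (-2:ℤ) ∉ C := notC 2 h2
      by_cases h3 : (3:ℤ) ∈ C
      · have n3 : (-3:ℤ) ∉ C := notC 3 h3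
        exact no_inter (hall {-1,-2,-3} (by decide))
          (by intro x hx; fin_cases hx <;> assumption)
      · exact no_inter (hall {-1,-2,3} (by decide))
          (by intro x hx; fin_cases hx <;> assumption)
    · by_cases h3 : (3:ℤ) ∈ C
      · have n3 : (-3:ℤ) ∉ C := notC 3 h3
        by_cases h4 : (4:ℤ) ∈ C
        · have n4 : (-4:ℤ) ∉ C := notC 4 h4
          exact no_inter (hall {-1,2,-3,-4} (by decide))
            (by intro x hx; fin_cases hx <;> assumption)
        · exact no_inter (hall {-1,2,-3,4} (by decide))
            (by intro x hx; fin_cases hx <;> assumption)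
      · by_cases h4 : (4:ℤ) ∈ C
        · have n4 : (-4:ℤ) ∉ C := notC 4 h4
          exact no_inter (hall {-1,2,3,-4} (by decide))
            (by intro x hx; fin_cases hx <;> assumption)
        · exact no_inter (hall {-1,2,3,4} (by decide))
            (by intro x hx; fin_cases hx <;> assumption)
  · by_cases h2 : (2:ℤ) ∈ C
    · have n2 : (-2:ℤ) ∉ C := notC 2 h2
      by_cases h3 : (3:ℤ) ∈ C
      · have n3 : (-3:ℤ) ∉ C := notC 3 h3
        by_cases h4 : (4:ℤ) ∈ C
        · have n4 : (-4:ℤ) ∉ C := notC 4 h4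
          exact no_inter (hall {1,-2,-3,-4} (by decide))
            (by intro x hx; fin_cases hx <;> assumption)
        · exact no_inter (hall {1,-2,-3,4} (by decide))
            (by intro x hx; fin_cases hx <;> assumption)
      · by_cases h4 : (4:ℤ) ∈ C
        · have n4 : (-4:ℤ) ∉ C := notC 4 h4
          exact no_inter (hall {1,-2,3,-4} (by decide))
            (by intro x hx; fin_cases hx <;> assumption)
        · exact no_inter (hall {1,-2,3,4} (by decide))
            (by intro x hx; fin_cases hx <;> assumption)
    · by_cases h3 : (3:ℤ) ∈ C
      · have n3 : (-3:ℤ) ∉ C := notC 3 h3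
        by_cases h4 : (4:ℤ) ∈ C
        · have n4 : (-4:ℤ) ∉ C := notC 4 h4
          exact no_inter (hall {1,2,-3,-4} (by decide))
            (by intro x hx; fin_cases hx <;> assumption)
        · exact no_inter (hall {1,2,-3,4} (by decide))
            (by intro x hx; fin_cases hx <;> assumption)
      · by_cases h4 : (4:ℤ) ∈ C
        · have n4 : (-4:ℤ) ∉ C := notC 4 h4
          exact no_inter (hall {1,2,3,-4} (by decide))
            (by intro x hx; fin_cases hx <;> assumption)
        · exact no_inter (hall {1,2,3,4} (by decide))
            (by intro x hx; fin_cases hx <;> assumption)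

theorem stmt_19 :
    ((∀ F : Finset (Finset ℤ), IsClauseSet F → MinUnsat F → deficiency F = 8 → nfc F ≤ 10) ∧
     (∃ F : Finset (Finset ℤ), IsClauseSet F ∧ ¬ Satisfiable F ∧ Hitting F ∧
        deficiency F = 8 ∧ nfc F = 10)) ∧
    ((∀ F : Finset (Finset ℤ), IsClauseSet F → MinUnsat F → deficiency F = 10 → nfc F ≤ 12) ∧
     (∃ F : Finset (Finset ℤ), IsClauseSet F ∧ ¬ Satisfiable F ∧ Hitting F ∧
        deficiency F = 10 ∧ nfc F = 12)) := by
  refine ⟨⟨fun F hF hMU hdef => ?_, ⟨F8, ?_, not_sat_F8, ?_, ?_, ?_⟩⟩,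
          ⟨fun F hF hMU hdef => ?_, ⟨F10, ?_, not_sat_F10, ?_, ?_, ?_⟩⟩⟩
  · exact upper_bound hF hMU (k := 8) (by exact_mod_cast hdef) (Or.inl rfl)
  · unfold IsClauseSet IsClause; decide
  · unfold Hitting; decide
  · decide
  · decide
  · exact upper_bound hF hMU (k := 10) (by exact_mod_cast hdef) (Or.inr rfl)
  · unfold IsClauseSet IsClause; decide
  · unfold Hitting; decide
  · decide
  · decide
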